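/- Let K be an imaginary CM field with maximal totally real subfield K^+, and n ≥ 2 an integer. Let a ∈ K satisfy N_{K/K^+}(a) = 1, and let K_a be the splitting field over K of x^n − a. Then K_a/K is a soluble extension and K_a is a CM field. -/

import Mathlib

open NumberField Polynomial

private theorem aux_eq_of_card_le_two {α : Type*} [Fintype α] (h : Fintype.card α ≤ 2)
    {x y z : α} (hx : x ≠ z) (hy : y ≠ z) : x = y := by
  classical
  by_contra hxy
  have hcard : ({x, y, z} : Finset α).card = 3 := by
    rw [Finset.card_insert_of_notMem (by simp [hxy, hx]),
      Finset.card_insert_of_notMem (by simp [hy]), Finset.card_singleton]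
  have := Finset.card_le_univ ({x, y, z} : Finset α)
  rw [hcard] at this
  omega

private theorem aux_real_pow_eq_one {t : ℝ} (ht : 0 ≤ t) {n : ℕ} (hn : n ≠ 0)
    (h : t ^ n = 1) : t = 1 := by
  rcases lt_trichotomy t 1 with h1 | h1 | h1
  · have := pow_lt_one₀ ht h1 hn
    rw [h] at this; exact absurd this (lt_irrefl 1)
  · exact h1
  · have := one_lt_pow₀ h1 hn
    rw [h] at this; exact absurd this (lt_irrefl 1)

private theorem aux_normal_of_finrank_two (F K : Type) [Field F] [Field K] [Algebra F K]
    [FiniteDimensional F K] (h : Module.finrank F K = 2) : Normal F K := by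
  rw [normal_iff]
  intro x
  have hint : IsIntegral F x := IsIntegral.of_finite F x
  refine ⟨hint, ?_⟩
  have hm : (minpoly F x).Monic := minpoly.monic hint
  have hd : (minpoly F x).natDegree ≤ 2 := h ▸ minpoly.natDegree_le x
  have hroot : ((minpoly F x).map (algebraMap F K)).IsRoot x := by
    have h0 : aeval x (minpoly F x) = 0 := minpoly.aeval F x
    rwa [aeval_def, ← Polynomial.eval_map] at h0
  obtain ⟨q, hq⟩ := Polynomial.dvd_iff_isRoot.mpr hroot
  have hq0 : q ≠ 0 := by
    rintro rfl
    rw [mul_zero] at hq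
    exact (hm.map (algebraMap F K)).ne_zero hq
  have hdeg := Polynomial.natDegree_mul (Polynomial.X_sub_C_ne_zero x) hq0
  rw [← hq, Polynomial.natDegree_map, Polynomial.natDegree_X_sub_C] at hdeg
  rw [hq]
  refine (Polynomial.Splits.X_sub_C _).mul
    (Polynomial.Splits.of_natDegree_le_one ?_)
  omega

set_option maxHeartbeats 1000000 in
set_option synthInstance.maxHeartbeats 400000 in
/-- **Kummer extensions by norm-one elements of CM fields are CM.**
Let `K` be an imaginary CM field with maximal totally real subfield `K⁺` (so `K⁺` is
totally real, `K/K⁺` is quadratic and `K` is totally imaginary), let `n ≥ 2`, and let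
`a ∈ K` with `N_{K/K⁺}(a) = 1`.  Let `K_a` be the splitting field of `x^n - a` over `K`.
Then `K_a/K` is a soluble (Galois) extension and `K_a` is a CM field: it is totally
imaginary and has a totally real subfield over which it is quadratic. -/
theorem splittingField_of_norm_one_is_CM
    (Kplus : Type) [Field Kplus] [NumberField Kplus]
    (K : Type) [Field K] [NumberField K] [Algebra Kplus K]
    (htr : ∀ v : InfinitePlace Kplus, v.IsReal)
    (him : ∀ v : InfinitePlace K, v.IsComplex)
    (hquad : Module.finrank Kplus K = 2)
    (n : ℕ) (hn : 2 ≤ n) (a : K) (ha : Algebra.norm Kplus a = 1)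
    (Ka : Type) [Field Ka] [Algebra K Ka]
    (hKa : IsSplittingField K Ka (X ^ n - C a)) :
    IsSolvable (Ka ≃ₐ[K] Ka) ∧
    (∀ v : InfinitePlace Ka, v.IsComplex) ∧
    ∃ F : Subfield Ka, (∀ w : InfinitePlace F, w.IsReal) ∧ Module.finrank F Ka = 2 := by
  classical
  have hn0 : n ≠ 0 := by omega
  set ι : K →+* Ka := algebraMap K Ka with hι
  haveI : FiniteDimensional K Ka := IsSplittingField.finiteDimensional Ka (X ^ n - C a)
  haveI : CharZero Ka := charZero_of_injective_algebraMap (algebraMap K Ka).injective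
  haveI : IsScalarTower ℚ K Ka := IsScalarTower.of_algebraMap_eq' (Subsingleton.elim _ _)
  haveI : FiniteDimensional ℚ Ka := FiniteDimensional.trans ℚ K Ka
  haveI : NumberField Ka := ⟨⟩
  haveI : FiniteDimensional Kplus K :=
    FiniteDimensional.of_finrank_pos (by rw [hquad]; norm_num)
  haveI : Normal Kplus K := aux_normal_of_finrank_two Kplus K hquad
  haveI : IsGalois Kplus K := ⟨⟩
  -- basic nonvanishing
  have ha0 : a ≠ 0 := by
    rintro rfl
    rw [Algebra.norm_zero] at ha
    exact zero_ne_one ha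
  have hιa0 : ι a ≠ 0 := fun h => ha0 (ι.injective (by rw [h, map_zero]))
  -- Part 1 : solvability
  have hsolv : IsSolvable (Ka ≃ₐ[K] Ka) := by
    haveI : Group.IsSolvable (X ^ n - C a).Gal := gal_X_pow_sub_C_isSolvable n a
    have e : Ka ≃ₐ[K] (X ^ n - C a).SplittingField := IsSplittingField.algEquiv Ka _
    have f : (X ^ n - C a).Gal ≃* (Ka ≃ₐ[K] Ka) := AlgEquiv.autCongr e.symm
    have hf : Function.Surjective f.toMonoidHom := f.surjective
    exact solvable_of_surjective hf
  -- Part 2 : totally imaginary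
  have htotIm : ∀ v : InfinitePlace Ka, v.IsComplex := by
    intro v
    rw [← InfinitePlace.not_isReal_iff_isComplex]
    intro hreal
    have h1 : ComplexEmbedding.IsReal v.embedding := InfinitePlace.isReal_iff.mp hreal
    have h2 : ComplexEmbedding.IsReal (v.embedding.comp ι) := h1.comp ι
    have h3 := him (InfinitePlace.mk (v.embedding.comp ι))
    rw [InfinitePlace.isComplex_mk_iff] at h3
    exact h3 h2
  -- the Galois conjugation of K / Kplus
  have hcard : Fintype.card (K ≃ₐ[Kplus] K) = 2 := by
    rw [← Nat.card_eq_fintype_card, IsGalois.card_aut_eq_finrank, hquad]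
  obtain ⟨c, hc1⟩ : ∃ c : K ≃ₐ[Kplus] K, c ≠ 1 :=
    Fintype.exists_ne_of_one_lt_card (by omega) 1
  have huniv : (Finset.univ : Finset (K ≃ₐ[Kplus] K)) = {1, c} := by
    symm
    apply Finset.eq_univ_of_card
    rw [Finset.card_insert_of_notMem (by simpa using hc1.symm), Finset.card_singleton, hcard]
  have hac : a * c a = 1 := by
    have h := Algebra.norm_eq_prod_automorphisms Kplus a
    rw [ha, map_one, huniv, Finset.prod_insert (by simpa using hc1.symm),
      Finset.prod_singleton] at h
    simpa using h.symm
  -- complex conjugation acts as `c` on every embedding of `K`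
  have hconjK : ∀ (φ : K →+* ℂ) (x : K), (starRingEnd ℂ) (φ x) = φ (c x) := by
    intro φ
    set ψ : Kplus →+* ℂ := φ.comp (algebraMap Kplus K) with hψ
    have hψr : ComplexEmbedding.IsReal ψ :=
      InfinitePlace.isReal_mk_iff.mp (htr (InfinitePlace.mk ψ))
    have hψr' : ∀ r : Kplus, (starRingEnd ℂ) (ψ r) = ψ r := fun r => by
      conv_rhs => rw [← hψr]
      rfl
    letI : Algebra Kplus ℂ := ψ.toAlgebra
    let Φ : K →ₐ[Kplus] ℂ := { toRingHom := φ, commutes' := fun r => rfl }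
    let Φc : K →ₐ[Kplus] ℂ :=
      { toRingHom := ((starRingEnd ℂ) : ℂ →+* ℂ).comp φ, commutes' := fun r => hψr' r }
    let Φ2 : K →ₐ[Kplus] ℂ := Φ.comp (c : K →ₐ[Kplus] K)
    have hcardA : Fintype.card (K →ₐ[Kplus] ℂ) ≤ 2 := by
      rw [AlgHom.card, hquad]
    have hne1 : Φc ≠ Φ := by
      intro hE
      have hφr : ComplexEmbedding.IsReal φ := by
        ext x
        exact congrArg (fun f : K →ₐ[Kplus] ℂ => f x) hE
      have := him (InfinitePlace.mk φ)
      rw [InfinitePlace.isComplex_mk_iff] at this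
      exact this hφr
    have hne2 : Φ2 ≠ Φ := by
      intro hE
      apply hc1
      ext x
      exact φ.injective (congrArg (fun f : K →ₐ[Kplus] ℂ => f x) hE)
    have hEq : Φc = Φ2 := aux_eq_of_card_le_two hcardA hne1 hne2
    intro x
    exact congrArg (fun f : K →ₐ[Kplus] ℂ => f x) hEq
  -- |φ(a)| = 1 for every embedding φ of Ka
  have hSa : ∀ φ : Ka →+* ℂ, (starRingEnd ℂ) (φ (ι a)) = (φ (ι a))⁻¹ := by
    intro φ
    have h := hconjK (φ.comp ι) a
    rw [RingHom.comp_apply, RingHom.comp_apply] at h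
    have h2 : φ (ι a) * (starRingEnd ℂ) (φ (ι a)) = 1 := by
      rw [h, ← map_mul, ← map_mul, hac, map_one, map_one]
    exact eq_inv_of_mul_eq_one_right (by rw [← h2, mul_comm])
  -- conjugation inverts every n-th root of a
  have hS : ∀ (φ : Ka →+* ℂ) (s : Ka), s ^ n = ι a →
      (starRingEnd ℂ) (φ s) = φ s⁻¹ := by
    intro φ s hs
    have hs0 : s ≠ 0 := by
      rintro rfl
      rw [zero_pow hn0] at hs
      exact hιa0 hs.symm
    have hφs0 : φ s ≠ 0 := fun h => hs0 (φ.injective (by rw [h, map_zero]))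
    have h1 : (φ s) ^ n = φ (ι a) := by rw [← map_pow, hs]
    have hz : (φ s * (starRingEnd ℂ) (φ s)) ^ n = 1 := by
      rw [mul_pow, ← map_pow (starRingEnd ℂ), h1, hSa φ, mul_inv_cancel₀ (fun h => hιa0
        (φ.injective (by rw [h, map_zero])))]
    have hnsq : φ s * (starRingEnd ℂ) (φ s) = ((Complex.normSq (φ s) : ℝ) : ℂ) :=
      Complex.mul_conj _
    have ht : (Complex.normSq (φ s) : ℝ) ^ n = 1 := by
      have := hz
      rw [hnsq, ← Complex.ofReal_pow] at this
      exact_mod_cast this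
    have ht1 : (Complex.normSq (φ s) : ℝ) = 1 :=
      aux_real_pow_eq_one (Complex.normSq_nonneg _) hn0 ht
    have h1 : φ s * (starRingEnd ℂ) (φ s) = 1 := by rw [hnsq, ht1, Complex.ofReal_one]
    rw [map_inv₀]
    exact eq_inv_of_mul_eq_one_right (by rw [← h1, mul_comm])
  -- Ka is generated over K by the n-th roots of a
  have hadj : Algebra.adjoin K {x : Ka | x ^ n = ι a} = ⊤ := by
    have h := hKa.adjoin_rootSet
    have hset : (X ^ n - C a).rootSet Ka = {x : Ka | x ^ n = ι a} := by
      ext x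
      rw [Polynomial.mem_rootSet]
      constructor
      · rintro ⟨-, h2⟩
        have : x ^ n - ι a = 0 := by simpa using h2
        simpa [sub_eq_zero] using this
      · intro hx
        refine ⟨X_pow_sub_C_ne_zero (by omega) a, ?_⟩
        rw [map_sub, map_pow, aeval_X, aeval_C, hx]
        exact sub_self _
    rwa [hset] at h
  -- an embedding of Ka
  haveI : Algebra.IsAlgebraic ℚ Ka := Algebra.IsAlgebraic.of_finite ℚ Ka
  let φ₀ : Ka →+* ℂ := (IsAlgClosed.lift (R := ℚ) (S := Ka) (M := ℂ)).toRingHom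
  -- conjugation stabilizes the image of φ₀
  have hrange : ∀ x : Ka, ∃ y : Ka, φ₀ y = (starRingEnd ℂ) (φ₀ x) := by
    intro x
    have hx : x ∈ Algebra.adjoin K {x : Ka | x ^ n = ι a} := hadj ▸ Algebra.mem_top
    induction hx using Algebra.adjoin_induction with
    | mem s hs => exact ⟨s⁻¹, (hS φ₀ s hs).symm⟩
    | algebraMap r => exact ⟨ι (c r), (hconjK (φ₀.comp ι) r).symm⟩
    | add x y hx hy ihx ihy =>
        obtain ⟨u, hu⟩ := ihx; obtain ⟨v, hv⟩ := ihy
        exact ⟨u + v, by rw [map_add, map_add, map_add, hu, hv]⟩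
    | mul x y hx hy ihx ihy =>
        obtain ⟨u, hu⟩ := ihx; obtain ⟨v, hv⟩ := ihy
        exact ⟨u * v, by rw [map_mul, map_mul, map_mul, hu, hv]⟩
  choose σf hσf using hrange
  have hinj := φ₀.injective
  have hσinv : ∀ x, σf (σf x) = x := fun x =>
    hinj (by rw [hσf, hσf, Complex.conj_conj])
  have hσadd : ∀ x y, σf (x + y) = σf x + σf y := fun x y =>
    hinj (by rw [hσf, map_add, map_add, map_add, hσf, hσf])
  have hσmul : ∀ x y, σf (x * y) = σf x * σf y := fun x y =>
    hinj (by rw [hσf, map_mul, map_mul, map_mul, hσf, hσf])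
  let σ : Ka ≃+* Ka :=
    { toFun := σf, invFun := σf, left_inv := hσinv, right_inv := hσinv,
      map_mul' := hσmul, map_add' := hσadd }
  -- key : every embedding of Ka intertwines σ with complex conjugation
  have hkey : ∀ (φ : Ka →+* ℂ) (x : Ka), (starRingEnd ℂ) (φ x) = φ (σf x) := by
    intro φ x
    have hx : x ∈ Algebra.adjoin K {x : Ka | x ^ n = ι a} := hadj ▸ Algebra.mem_top
    induction hx using Algebra.adjoin_induction with
    | mem s hs =>
        have h1 : σf s = s⁻¹ := hinj (by rw [hσf, hS φ₀ s hs])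
        rw [h1, hS φ s hs]
    | algebraMap r =>
        have hc0 := hconjK (φ₀.comp ι) r
        rw [RingHom.comp_apply, RingHom.comp_apply] at hc0
        have h1 : σf (ι r) = ι (c r) := hinj (by rw [hσf, hc0])
        have hc2 := hconjK (φ.comp ι) r
        rw [RingHom.comp_apply, RingHom.comp_apply] at hc2
        rw [h1]
        exact hc2
    | add x y hx hy ihx ihy => rw [map_add, map_add, hσadd, map_add, ihx, ihy]
    | mul x y hx hy ihx ihy => rw [map_mul, map_mul, hσmul, map_mul, ihx, ihy]
  -- σ is not the identity
  have hσne : σ ≠ 1 := by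
    intro h
    have hid : ∀ x, σf x = x := fun x => congrArg (fun e : Ka ≃+* Ka => e x) h
    have hφr : ComplexEmbedding.IsReal φ₀ := by
      ext x
      show (starRingEnd ℂ) (φ₀ x) = φ₀ x
      rw [hkey φ₀ x, hid]
    have := htotIm (InfinitePlace.mk φ₀)
    rw [InfinitePlace.isComplex_mk_iff] at this
    exact this hφr
  have hσ2 : σ ^ 2 = 1 := by
    ext x
    show σ (σ x) = x
    exact hσinv x
  have hσord : orderOf σ = 2 := orderOf_eq_prime hσ2 hσne
  -- the fixed field of σ
  haveI : Finite (Subgroup.zpowers σ) := by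
    have : (Subgroup.zpowers σ : Set (Ka ≃+* Ka)).Finite :=
      finite_zpowers.mpr (isOfFinOrder_iff_pow_eq_one.mpr ⟨2, by norm_num, hσ2⟩)
    exact this.to_subtype
  haveI : Fintype (Subgroup.zpowers σ) := Fintype.ofFinite _
  have hcardG : Fintype.card (Subgroup.zpowers σ) = 2 := by
    rw [← Nat.card_eq_fintype_card, Nat.card_zpowers, hσord]
  haveI : FaithfulSMul (Subgroup.zpowers σ) Ka := by
    constructor
    intro g₁ g₂ h
    apply Subtype.ext
    ext x
    exact h x
  have hfix : Module.finrank (FixedPoints.subfield (Subgroup.zpowers σ) Ka) Ka = 2 := by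
    rw [FixedPoints.finrank_eq_card, hcardG]
  refine ⟨hsolv, htotIm, FixedPoints.subfield (Subgroup.zpowers σ) Ka, ?_, hfix⟩
  -- the fixed field is totally real
  intro w
  haveI : FiniteDimensional (FixedPoints.subfield (Subgroup.zpowers σ) Ka) Ka :=
    FiniteDimensional.of_finrank_pos (by rw [hfix]; norm_num)
  haveI : Algebra.IsAlgebraic (FixedPoints.subfield (Subgroup.zpowers σ) Ka) Ka :=
    Algebra.IsAlgebraic.of_finite _ _
  letI : Algebra (FixedPoints.subfield (Subgroup.zpowers σ) Ka) ℂ := w.embedding.toAlgebra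
  let Φ : Ka →ₐ[FixedPoints.subfield (Subgroup.zpowers σ) Ka] ℂ := IsAlgClosed.lift
  rw [InfinitePlace.isReal_iff]
  ext y
  show (starRingEnd ℂ) (w.embedding y) = w.embedding y
  have hy : Φ (y : Ka) = w.embedding y := Φ.commutes y
  have hfixed : σf (y : Ka) = (y : Ka) := y.2 ⟨σ, Subgroup.mem_zpowers σ⟩
  have h2 : (starRingEnd ℂ) (Φ (y : Ka)) = Φ (σf (y : Ka)) := hkey Φ.toRingHom _
  rw [← hy, h2, hfixed]
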